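/- Let S be a bi-ideal-free semiring such that for all a, b ∈ S there exists c ∈ S with c ≤_S a and c ≤_S b. Then M_n(S) is bi-ideal-free for every n ≥ 1. -/
import Mathlib


/-- A semiring in the sense of the paper: associative `+` and `*`, `+` commutative,
`*` distributing over `+` from both sides; no zero or unity assumed. -/
class PSemiring (S : Type) extends AddCommSemigroup S, Semigroup S where
  left_distrib : ∀ a b c : S, a * (b + c) = a * b + a * c
  right_distrib : ∀ a b c : S, (a + b) * c = a * c + b * c

section Defs
variable {T : Type} [Add T] [Mul T]

def MulAbsorbing (w : T) : Prop := ∀ a : T, a * w = w ∧ w * a = w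
def AddAbsorbing (w : T) : Prop := ∀ a : T, a + w = w
def AddNeutral (w : T) : Prop := ∀ a : T, a + w = a
def BiAbsorbing (w : T) : Prop := MulAbsorbing w ∧ AddAbsorbing w
def IsZero (w : T) : Prop := MulAbsorbing w ∧ AddNeutral w
def IsUnity (w : T) : Prop := ∀ a : T, w * a = a ∧ a * w = a

def IsBiIdeal (I : Set T) : Prop :=
  I.Nonempty ∧ ∀ a ∈ I, ∀ s : T, a + s ∈ I ∧ a * s ∈ I ∧ s * a ∈ I

def IsCongruence (r : T → T → Prop) : Prop :=
  Equivalence r ∧ (∀ a b c d : T, r a b → r c d → r (a + c) (b + d)) ∧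
    (∀ a b c d : T, r a b → r c d → r (a * c) (b * d))

/-- The standard quasiordering on a semiring. -/
def leS (a b : T) : Prop := a = b ∨ ∃ c : T, a + c = b

/-- `addPow m b` is the `(m+1)`-fold sum `b + ⋯ + b`. -/
def addPow : ℕ → T → T
  | 0, b => b
  | m + 1, b => addPow m b + b

end Defs

def CongSimple (T : Type) [Add T] [Mul T] : Prop :=
  (∃ a b : T, a ≠ b) ∧
    ∀ r : T → T → Prop, IsCongruence r →
      (∀ a b : T, r a b ↔ a = b) ∨ (∀ a b : T, r a b)

def BiIdealSimple (T : Type) [Add T] [Mul T] : Prop :=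
  (∃ a b : T, a ≠ b) ∧
    ∀ I : Set T, IsBiIdeal I → (∃ w : T, I = {w}) ∨ I = Set.univ

def BiIdealFree (T : Type) [Add T] [Mul T] : Prop :=
  (∃ a b : T, a ≠ b) ∧ ∀ I : Set T, IsBiIdeal I → I = Set.univ

/-- Sum of a nonempty family indexed by `Fin (n+1)`. -/
def finSum {S : Type} [Add S] : ∀ {n : ℕ}, (Fin (n + 1) → S) → S
  | 0, f => f 0
  | n + 1, f => finSum (fun i : Fin (n + 1) => f i.castSucc) + f (Fin.last (n + 1))

/-- `Mat n S` is the semiring of `(n+1) × (n+1)` matrices over `S`. -/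
structure Mat (n : ℕ) (S : Type) where
  entry : Fin (n + 1) → Fin (n + 1) → S

instance {n : ℕ} {S : Type} [Add S] : Add (Mat n S) :=
  ⟨fun A B => ⟨fun i j => A.entry i j + B.entry i j⟩⟩

instance {n : ℕ} {S : Type} [Add S] [Mul S] : Mul (Mat n S) :=
  ⟨fun A B => ⟨fun i j => finSum (fun k => A.entry i k * B.entry k j)⟩⟩

/-- The constant matrix `ā`. -/
def Mat.const (n : ℕ) {S : Type} (a : S) : Mat n S := ⟨fun _ _ => a⟩


lemma Mat.ext' {n : ℕ} {S : Type} {A B : Mat n S}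
    (h : ∀ i j, A.entry i j = B.entry i j) : A = B := by
  cases A with
  | mk f =>
    cases B with
    | mk g =>
      congr 1
      funext i j
      exact h i j

section AuxS
variable {S : Type} [PSemiring S]

lemma leS_trans' {a b c : S} (h1 : leS a b) (h2 : leS b c) : leS a c := by
  rcases h1 with rfl | ⟨d, rfl⟩
  · exact h2
  rcases h2 with h | ⟨e, he⟩
  · exact Or.inr ⟨d, h⟩
  · exact Or.inr ⟨d + e, by rw [← add_assoc]; exact he⟩

lemma finSum_mul : ∀ {m : ℕ} (f : Fin (m + 1) → S) (a : S),
    finSum (fun k => f k * a) = finSum f * a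
  | 0, f, a => rfl
  | m + 1, f, a => by
    show finSum (fun i : Fin (m + 1) => f i.castSucc * a) + f (Fin.last (m + 1)) * a = _
    rw [finSum_mul (fun i => f i.castSucc) a]
    exact (PSemiring.right_distrib _ _ _).symm

lemma mul_finSum : ∀ {m : ℕ} (a : S) (f : Fin (m + 1) → S),
    finSum (fun k => a * f k) = a * finSum f
  | 0, a, f => rfl
  | m + 1, a, f => by
    show finSum (fun i : Fin (m + 1) => a * f i.castSucc) + a * f (Fin.last (m + 1)) = _
    rw [mul_finSum a (fun i => f i.castSucc)]
    exact (PSemiring.left_distrib _ _ _).symm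

lemma sum_repr (hsplit : ∀ b : S, ∃ x y : S, x + y = b) :
    ∀ (m : ℕ) (s : S), ∃ f : Fin (m + 1) → S, finSum f = s
  | 0, s => ⟨fun _ => s, rfl⟩
  | m + 1, s => by
    obtain ⟨x, y, hxy⟩ := hsplit s
    obtain ⟨f, hf⟩ := sum_repr hsplit m x
    refine ⟨Fin.snoc f y, ?_⟩
    show finSum (fun i : Fin (m + 1) => (Fin.snoc f y : Fin (m + 2) → S) i.castSucc)
        + (Fin.snoc f y : Fin (m + 2) → S) (Fin.last (m + 1)) = s
    rw [Fin.snoc_last]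
    have hcongr : (fun i : Fin (m + 1) => (Fin.snoc f y : Fin (m + 2) → S) i.castSucc) = f := by
      funext i; exact Fin.snoc_castSucc _ _ _
    rw [hcongr, hf, hxy]

lemma dir_fin (hd : ∀ a b : S, ∃ c : S, leS c a ∧ leS c b) :
    ∀ (m : ℕ) (g : Fin (m + 1) → S), ∃ c, ∀ i, leS c (g i)
  | 0, g => ⟨g 0, fun i => by
      have hi : i = 0 := Fin.ext (by have := i.isLt; omega)
      rw [hi]; exact Or.inl rfl⟩
  | m + 1, g => by
    obtain ⟨c0, hc0⟩ := dir_fin hd m (fun i => g i.castSucc)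
    obtain ⟨c, hc1, hc2⟩ := hd c0 (g (Fin.last (m + 1)))
    refine ⟨c, fun i => ?_⟩
    by_cases h : (i : ℕ) < m + 1
    · have hi : i = Fin.castSucc ⟨(i : ℕ), h⟩ := Fin.ext rfl
      rw [hi]
      exact leS_trans' hc1 (hc0 _)
    · have hi : i = Fin.last (m + 1) := Fin.ext (by have := i.isLt; simp [Fin.last]; omega)
      rw [hi]
      exact hc2

end AuxS

/-- if `S` is bi-ideal-free and `≤_S` is downwards directed, then
`M_n(S)` is bi-ideal-free for every `n ≥ 1` (`Mat n S` has size `n+1`). -/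
theorem stmt16 {S : Type} [PSemiring S] (hS : BiIdealFree S)
    (hd : ∀ a b : S, ∃ c : S, leS c a ∧ leS c b) (n : ℕ) :
    BiIdealFree (Mat n S) := by
  obtain ⟨⟨a0, b0, hab⟩, hSI⟩ := hS
  constructor
  · exact ⟨Mat.const n a0, Mat.const n b0, fun h =>
      hab (congrFun (congrFun (congrArg Mat.entry h) 0) 0)⟩
  intro I hI
  -- Every element of `S` is a sum of two elements.
  have hsplit : ∀ b : S, ∃ x y : S, x + y = b := by
    have hbi : IsBiIdeal {b : S | ∃ x y : S, x + y = b} := by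
      refine ⟨⟨a0 + a0, a0, a0, rfl⟩, ?_⟩
      rintro b ⟨x, y, rfl⟩ s
      exact ⟨⟨x, y + s, (add_assoc _ _ _).symm⟩,
             ⟨x * s, y * s, (PSemiring.right_distrib _ _ _).symm⟩,
             ⟨s * x, s * y, (PSemiring.left_distrib _ _ _).symm⟩⟩
    have huniv := hSI _ hbi
    intro b
    have hb : b ∈ ({b : S | ∃ x y : S, x + y = b}) := huniv ▸ Set.mem_univ b
    exact hb
  obtain ⟨A, hA⟩ := hI.1
  -- `I` contains a constant matrix.
  set u : S := finSum (fun k : Fin (n + 1) =>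
    a0 * finSum (fun l : Fin (n + 1) => A.entry k l * a0)) with hu
  have h1 : A * Mat.const n a0 ∈ I := (hI.2 A hA (Mat.const n a0)).2.1
  have h2 : Mat.const n a0 * (A * Mat.const n a0) ∈ I :=
    (hI.2 _ h1 (Mat.const n a0)).2.2
  have heq : Mat.const n a0 * (A * Mat.const n a0) = Mat.const n u :=
    Mat.ext' fun i j => rfl
  have hu_mem : Mat.const n u ∈ I := heq ▸ h2
  -- The set of constants in `I` is a bi-ideal of `S`, hence everything.
  have hK : IsBiIdeal {c : S | Mat.const n c ∈ I} := by
    refine ⟨⟨u, hu_mem⟩, ?_⟩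
    intro c hc s
    refine ⟨?_, ?_, ?_⟩
    · have he : Mat.const n c + Mat.const n s = Mat.const n (c + s) :=
        Mat.ext' fun i j => rfl
      exact Set.mem_setOf_eq ▸ (he ▸ (hI.2 _ hc (Mat.const n s)).1)
    · obtain ⟨f, hf⟩ := sum_repr hsplit n s
      have he : Mat.const n c * (⟨fun k _ => f k⟩ : Mat n S) = Mat.const n (c * s) := by
        apply Mat.ext'
        intro i j
        show finSum (fun k => c * f k) = c * s
        rw [mul_finSum, hf]
      exact Set.mem_setOf_eq ▸ (he ▸ (hI.2 _ hc _).2.1)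
    · obtain ⟨f, hf⟩ := sum_repr hsplit n s
      have he : (⟨fun _ k => f k⟩ : Mat n S) * Mat.const n c = Mat.const n (s * c) := by
        apply Mat.ext'
        intro i j
        show finSum (fun k => f k * c) = s * c
        rw [finSum_mul, hf]
      exact Set.mem_setOf_eq ▸ (he ▸ (hI.2 _ hc _).2.2)
  have hKuniv := hSI _ hK
  have hconst : ∀ c : S, Mat.const n c ∈ I := fun c => by
    have hc : c ∈ ({c : S | Mat.const n c ∈ I}) := hKuniv ▸ Set.mem_univ c
    exact hc
  -- Every matrix lies in `I`.
  apply Set.eq_univ_iff_forall.mpr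
  intro B
  choose x y hxy using fun p : Fin (n + 1) × Fin (n + 1) => hsplit (B.entry p.1 p.2)
  choose cR hcR using fun i : Fin (n + 1) => dir_fin hd n (fun j => x (i, j))
  obtain ⟨c, hc⟩ := dir_fin hd n cR
  have hcx : ∀ i j, leS c (x (i, j)) := fun i j => leS_trans' (hc i) (hcR i j)
  have hstrict : ∀ i j : Fin (n + 1), ∃ d, c + d = B.entry i j := by
    intro i j
    rcases hcx i j with h | ⟨e, he⟩
    · exact ⟨y (i, j), by rw [h]; exact hxy (i, j)⟩
    · exact ⟨e + y (i, j), by rw [← add_assoc, he]; exact hxy (i, j)⟩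
  choose D hD using hstrict
  have hB : Mat.const n c + (⟨D⟩ : Mat n S) = B := Mat.ext' fun i j => hD i j
  exact hB ▸ (hI.2 _ (hconst c) _).1
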